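/- Let G be a finite graph with symmetric edge weights and let Ω be a finite subset of vertices with vertex boundary δΩ. Then the Escobar-type Cheeger constant satisfies h_E(Ω̃) = inf over all real-valued functions f on Ω̄ of ( Σ_{e={x,y} ∈ E(Ω,Ω̄)} μ_{xy} |f(x) − f(y)| ) / ( inf_{a ∈ ℝ} Σ_{x ∈ δΩ} m_x |f(x) − a| ), where the infimum is over nonconstant f (so that the denominator is nonzero). -/
import Mathlib


open scoped Classical
open Finset

variable {V : Type*} [Fintype V]

/-- The vertex boundary δΩ of a finite set Ω of vertices. -/
noncomputable def bdry (μ : V → V → ℝ) (Ω : Finset V) : Finset V :=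
  Finset.univ.filter fun x => x ∉ Ω ∧ ∃ y ∈ Ω, 0 < μ x y

/-- Ω̄ = Ω ∪ δΩ. -/
noncomputable def clos (μ : V → V → ℝ) (Ω : Finset V) : Finset V :=
  Ω ∪ bdry μ Ω

/-- The vertex measure m on Ω̄. -/
noncomputable def vm (μ : V → V → ℝ) (Ω : Finset V) (x : V) : ℝ :=
  if x ∈ Ω then ∑ y, μ x y else ∑ y ∈ Ω, μ x y

/-- m(B) = Σ_{x ∈ B} m_x. -/
noncomputable def msum (μ : V → V → ℝ) (Ω : Finset V) (B : Finset V) : ℝ :=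
  ∑ x ∈ B, vm μ Ω x

/-- Sum over the edges e = {x,y} of E(Ω,Ω̄) of μ_{xy} · F x y (for symmetric F). -/
noncomputable def edgeSum (μ : V → V → ℝ) (Ω : Finset V) (F : V → V → ℝ) : ℝ :=
  (∑ x ∈ Ω, ∑ y ∈ Ω, μ x y * F x y) / 2 +
    ∑ x ∈ Ω, ∑ y ∈ bdry μ Ω, μ x y * F x y

/-- Dirichlet energy D_Ω(f). -/
noncomputable def dirichlet (μ : V → V → ℝ) (Ω : Finset V) (f : V → ℝ) : ℝ :=
  edgeSum μ Ω fun x y => (f x - f y) ^ 2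

/-- Dirichlet form D_Ω(f,g). -/
noncomputable def dform (μ : V → V → ℝ) (Ω : Finset V) (f g : V → ℝ) : ℝ :=
  edgeSum μ Ω fun x y => (f x - f y) * (g x - g y)

/-- μ(∂_Ω A): total weight of the edges of E(Ω,Ω̄) with exactly one endpoint in A. -/
noncomputable def cut (μ : V → V → ℝ) (Ω : Finset V) (A : Finset V) : ℝ :=
  edgeSum μ Ω fun x y => if (x ∈ A) ↔ (y ∈ A) then 0 else 1

/-- The graph Laplacian Δf(x) (used for x ∈ Ω). -/
noncomputable def lap (μ : V → V → ℝ) (Ω : Finset V) (f : V → ℝ) (x : V) : ℝ :=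
  (∑ y, μ x y * (f y - f x)) / vm μ Ω x

/-- The outward normal derivative ∂f/∂n(z) (used for z ∈ δΩ). -/
noncomputable def nderiv (μ : V → V → ℝ) (Ω : Finset V) (f : V → ℝ) (z : V) : ℝ :=
  (∑ x ∈ Ω, μ z x * (f z - f x)) / vm μ Ω z

/-- f is harmonic on Ω. -/
def IsHarmonic (μ : V → V → ℝ) (Ω : Finset V) (u : V → ℝ) : Prop :=
  ∀ x ∈ Ω, lap μ Ω u x = 0

/-- Adjacency in the graph Ω̃ = (Ω̄, E(Ω,Ω̄)). -/
def tilAdj (μ : V → V → ℝ) (Ω : Finset V) (x y : V) : Prop :=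
  0 < μ x y ∧ (x ∈ Ω ∨ y ∈ Ω)

/-- The graph Ω̃ is connected. -/
def TilConnected (μ : V → V → ℝ) (Ω : Finset V) : Prop :=
  ∀ x ∈ clos μ Ω, ∀ y ∈ clos μ Ω, Relation.ReflTransGen (tilAdj μ Ω) x y

/-- λ₁(Ω): the first nontrivial eigenvalue of the Dirichlet-to-Neumann operator,
characterized by its Rayleigh quotient. -/
noncomputable def lambda1 (μ : V → V → ℝ) (Ω : Finset V) : ℝ :=
  sInf { r : ℝ | ∃ u : V → ℝ, IsHarmonic μ Ω u ∧
    (∑ x ∈ bdry μ Ω, u x ^ 2 * vm μ Ω x) = 1 ∧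
    (∑ x ∈ bdry μ Ω, u x * vm μ Ω x) = 0 ∧
    r = dirichlet μ Ω u }

/-- The Escobar-type Cheeger constant h_E(Ω̃). -/
noncomputable def hE (μ : V → V → ℝ) (Ω : Finset V) : ℝ :=
  sInf { r : ℝ | ∃ A : Finset V, A ⊆ clos μ Ω ∧
    0 < msum μ Ω (A ∩ bdry μ Ω) ∧
    msum μ Ω (A ∩ bdry μ Ω) ≤ msum μ Ω (bdry μ Ω) / 2 ∧
    r = cut μ Ω A / msum μ Ω (A ∩ bdry μ Ω) }

/-- The Jammes-type Cheeger constant h_J(Ω̃). -/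
noncomputable def hJ (μ : V → V → ℝ) (Ω : Finset V) : ℝ :=
  sInf { r : ℝ | ∃ A : Finset V, A ⊆ clos μ Ω ∧
    (A ∩ bdry μ Ω).Nonempty ∧
    msum μ Ω A ≤ msum μ Ω (clos μ Ω) / 2 ∧
    r = cut μ Ω A / msum μ Ω (A ∩ bdry μ Ω) }

/-- The classical Cheeger constant h(Ω̃). -/
noncomputable def cheeger (μ : V → V → ℝ) (Ω : Finset V) : ℝ :=
  sInf { r : ℝ | ∃ A : Finset V, A ⊆ clos μ Ω ∧ A.Nonempty ∧
    msum μ Ω A ≤ msum μ Ω (clos μ Ω) / 2 ∧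
    r = cut μ Ω A / msum μ Ω A }


section Helpers

variable {μ : V → V → ℝ} {Ω : Finset V}

lemma vm_nonneg (hnn : ∀ x y, 0 ≤ μ x y) (x : V) : 0 ≤ vm μ Ω x := by
  unfold vm; split <;> exact Finset.sum_nonneg fun y _ => hnn x y

lemma bdry_subset_clos : bdry μ Ω ⊆ clos μ Ω := Finset.subset_union_right

lemma omega_subset_clos : Ω ⊆ clos μ Ω := Finset.subset_union_left

lemma vm_pos_bdry (hnn : ∀ x y, 0 ≤ μ x y) {x : V} (hx : x ∈ bdry μ Ω) :
    0 < vm μ Ω x := by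
  simp only [bdry, Finset.mem_filter] at hx
  obtain ⟨-, hxΩ, y, hy, hμ⟩ := hx
  unfold vm
  rw [if_neg hxΩ]
  exact Finset.sum_pos' (fun z _ => hnn x z) ⟨y, hy, hμ⟩

lemma msum_nonneg (hnn : ∀ x y, 0 ≤ μ x y) (B : Finset V) : 0 ≤ msum μ Ω B :=
  Finset.sum_nonneg fun x _ => vm_nonneg hnn x

lemma msum_mono (hnn : ∀ x y, 0 ≤ μ x y) {A B : Finset V} (h : A ⊆ B) :
    msum μ Ω A ≤ msum μ Ω B :=
  Finset.sum_le_sum_of_subset_of_nonneg h fun x _ _ => vm_nonneg hnn x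

lemma msum_filter_split (B : Finset V) (p : V → Prop) :
    msum μ Ω (B.filter p) + msum μ Ω (B.filter fun x => ¬ p x) = msum μ Ω B :=
  Finset.sum_filter_add_sum_filter_not _ _ _

lemma edgeSum_mono (hnn : ∀ x y, 0 ≤ μ x y) {F G : V → V → ℝ}
    (h : ∀ x ∈ Ω, ∀ y ∈ clos μ Ω, F x y ≤ G x y) :
    edgeSum μ Ω F ≤ edgeSum μ Ω G := by
  have h1 : ∑ x ∈ Ω, ∑ y ∈ Ω, μ x y * F x y ≤ ∑ x ∈ Ω, ∑ y ∈ Ω, μ x y * G x y :=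
    Finset.sum_le_sum fun x hx => Finset.sum_le_sum fun y hy =>
      mul_le_mul_of_nonneg_left (h x hx y (omega_subset_clos hy)) (hnn x y)
  have h2 : ∑ x ∈ Ω, ∑ y ∈ bdry μ Ω, μ x y * F x y ≤
      ∑ x ∈ Ω, ∑ y ∈ bdry μ Ω, μ x y * G x y :=
    Finset.sum_le_sum fun x hx => Finset.sum_le_sum fun y hy =>
      mul_le_mul_of_nonneg_left (h x hx y (bdry_subset_clos hy)) (hnn x y)
  unfold edgeSum
  linarith

lemma edgeSum_congr {F G : V → V → ℝ}
    (h : ∀ x ∈ Ω, ∀ y ∈ clos μ Ω, F x y = G x y) :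
    edgeSum μ Ω F = edgeSum μ Ω G := by
  unfold edgeSum
  congr 1
  · congr 1
    exact Finset.sum_congr rfl fun x hx => Finset.sum_congr rfl fun y hy => by
      rw [h x hx y (omega_subset_clos hy)]
  · exact Finset.sum_congr rfl fun x hx => Finset.sum_congr rfl fun y hy => by
      rw [h x hx y (bdry_subset_clos hy)]

lemma edgeSum_zero : edgeSum μ Ω (fun _ _ => (0:ℝ)) = 0 := by
  simp [edgeSum]

lemma edgeSum_nonneg (hnn : ∀ x y, 0 ≤ μ x y) {F : V → V → ℝ}
    (h : ∀ x y, 0 ≤ F x y) : 0 ≤ edgeSum μ Ω F := by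
  have := edgeSum_mono (Ω := Ω) hnn (F := fun _ _ => (0:ℝ)) (G := F)
    (fun x _ y _ => h x y)
  simpa [edgeSum_zero] using this

lemma cut_nonneg (hnn : ∀ x y, 0 ≤ μ x y) (A : Finset V) : 0 ≤ cut μ Ω A :=
  edgeSum_nonneg hnn fun x y => by split <;> norm_num

lemma edgeSum_add_smul (c : ℝ) (F G : V → V → ℝ) :
    edgeSum μ Ω (fun x y => F x y + c * G x y) =
      edgeSum μ Ω F + c * edgeSum μ Ω G := by
  have e1 : ∀ s t : Finset V,
      ∑ x ∈ s, ∑ y ∈ t, μ x y * (F x y + c * G x y) =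
        (∑ x ∈ s, ∑ y ∈ t, μ x y * F x y) + c * ∑ x ∈ s, ∑ y ∈ t, μ x y * G x y := by
    intro s t
    rw [Finset.mul_sum, ← Finset.sum_add_distrib]
    refine Finset.sum_congr rfl fun x _ => ?_
    rw [Finset.mul_sum, ← Finset.sum_add_distrib]
    exact Finset.sum_congr rfl fun y _ => by ring
  unfold edgeSum
  rw [e1, e1]
  ring

lemma hE_nonneg (hnn : ∀ x y, 0 ≤ μ x y) : 0 ≤ hE μ Ω := by
  apply Real.sInf_nonneg
  rintro r ⟨A, -, hm, -, rfl⟩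
  exact div_nonneg (cut_nonneg hnn A) hm.le

lemma hE_mul_le (hnn : ∀ x y, 0 ≤ μ x y) {A : Finset V} (h1 : A ⊆ clos μ Ω)
    (h2 : 0 < msum μ Ω (A ∩ bdry μ Ω))
    (h3 : msum μ Ω (A ∩ bdry μ Ω) ≤ msum μ Ω (bdry μ Ω) / 2) :
    hE μ Ω * msum μ Ω (A ∩ bdry μ Ω) ≤ cut μ Ω A := by
  have hle : hE μ Ω ≤ cut μ Ω A / msum μ Ω (A ∩ bdry μ Ω) := by
    apply csInf_le
    · refine ⟨0, ?_⟩
      rintro r ⟨A', -, hm', -, rfl⟩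
      exact div_nonneg (cut_nonneg hnn A') hm'.le
    · exact ⟨A, h1, h2, h3, rfl⟩
  calc hE μ Ω * msum μ Ω (A ∩ bdry μ Ω)
      ≤ (cut μ Ω A / msum μ Ω (A ∩ bdry μ Ω)) * msum μ Ω (A ∩ bdry μ Ω) :=
        mul_le_mul_of_nonneg_right hle h2.le
    _ = cut μ Ω A := div_mul_cancel₀ _ h2.ne'


lemma coarea_aux (hnn : ∀ x y, 0 ≤ μ x y) :
    ∀ n (g : V → ℝ), (∀ x, 0 ≤ g x) →
      (((clos μ Ω).filter fun x => 0 < g x).image g).card = n →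
      msum μ Ω ((bdry μ Ω).filter fun x => 0 < g x) ≤ msum μ Ω (bdry μ Ω) / 2 →
      hE μ Ω * (∑ x ∈ bdry μ Ω, vm μ Ω x * g x) ≤
        edgeSum μ Ω fun x y => |g x - g y| := by
  intro n
  induction n using Nat.strong_induction_on with
  | _ n ih =>
  intro g hg hcard hhalf
  rcases Nat.eq_zero_or_pos n with h0 | hpos
  · -- base case: g = 0 on clos
    subst h0
    have himg : (((clos μ Ω).filter fun x => 0 < g x)).image g = ∅ :=
      Finset.card_eq_zero.mp hcard
    have hfil : ((clos μ Ω).filter fun x => 0 < g x) = ∅ :=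
      Finset.image_eq_empty.mp himg
    have hz : ∀ x ∈ clos μ Ω, g x = 0 := by
      intro x hx
      by_contra h
      have hx0 : 0 < g x := lt_of_le_of_ne (hg x) (Ne.symm h)
      have hmem : x ∈ ((clos μ Ω).filter fun x => 0 < g x) :=
        Finset.mem_filter.mpr ⟨hx, hx0⟩
      rw [hfil] at hmem
      exact absurd hmem (Finset.notMem_empty x)
    have hsum : (∑ x ∈ bdry μ Ω, vm μ Ω x * g x) = 0 :=
      Finset.sum_eq_zero fun x hx => by rw [hz x (bdry_subset_clos hx), mul_zero]
    have hedge : edgeSum μ Ω (fun x y => |g x - g y|) = 0 := by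
      rw [edgeSum_congr (G := fun _ _ => (0:ℝ))
        (fun x hx y hy => by
          rw [hz x (omega_subset_clos hx), hz y hy, sub_zero, abs_zero]),
        edgeSum_zero]
    rw [hsum, hedge, mul_zero]
  · -- inductive step
    set S : Finset ℝ := ((clos μ Ω).filter fun x => 0 < g x).image g with hS
    have hSne : S.Nonempty := Finset.card_pos.mp (hcard ▸ hpos)
    set M : ℝ := S.max' hSne with hM
    have hMS : M ∈ S := S.max'_mem hSne
    have hMpos : 0 < M := by
      obtain ⟨x, hx, hgx⟩ := Finset.mem_image.mp hMS
      exact hgx ▸ (Finset.mem_filter.mp hx).2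
    have hins : (insert (0:ℝ) (S.erase M)).Nonempty := Finset.insert_nonempty _ _
    set M' : ℝ := (insert (0:ℝ) (S.erase M)).max' hins with hM'
    have hM'0 : 0 ≤ M' := Finset.le_max' _ 0 (Finset.mem_insert_self _ _)
    have hM'M : M' < M := by
      apply (Finset.max'_lt_iff _ hins).mpr
      intro t ht
      rcases Finset.mem_insert.mp ht with rfl | ht
      · exact hMpos
      · exact lt_of_le_of_ne (Finset.le_max' _ _ (Finset.mem_of_mem_erase ht))
          (Finset.ne_of_mem_erase ht)
    set g' : V → ℝ := fun x => min (g x) M' with hg'def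
    have hg' : ∀ x, 0 ≤ g' x := fun x => le_min (hg x) hM'0
    have hkey : ∀ x ∈ clos μ Ω, M' < g x → g x = M := by
      intro x hx h
      by_contra hne
      have hgx : 0 < g x := lt_of_le_of_lt hM'0 h
      have h1 : g x ∈ S := Finset.mem_image_of_mem g (Finset.mem_filter.mpr ⟨hx, hgx⟩)
      have h2 : g x ∈ insert (0:ℝ) (S.erase M) :=
        Finset.mem_insert_of_mem (Finset.mem_erase.mpr ⟨hne, h1⟩)
      exact absurd (Finset.le_max' _ _ h2) (not_le.mpr h)
    set A : Finset V := (clos μ Ω).filter fun x => M ≤ g x with hA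
    have hmemA : ∀ x ∈ clos μ Ω, x ∈ A → g x = M ∧ g' x = M' := by
      intro x hx hxA
      have hMg : M ≤ g x := (Finset.mem_filter.mp hxA).2
      have hgx : g x = M := hkey x hx (lt_of_lt_of_le hM'M hMg)
      refine ⟨hgx, ?_⟩
      show min (g x) M' = M'
      rw [hgx]; exact min_eq_right hM'M.le
    have hnotA : ∀ x ∈ clos μ Ω, x ∉ A → g' x = g x ∧ g x ≤ M' := by
      intro x hx hxA
      have hnle : ¬ M ≤ g x := fun h => hxA (Finset.mem_filter.mpr ⟨hx, h⟩)
      have hle : g x ≤ M' := by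
        by_contra h
        exact hnle (hkey x hx (not_le.mp h)).ge
      exact ⟨min_eq_left hle, hle⟩
    have hpt : ∀ x ∈ clos μ Ω,
        g x = g' x + (M - M') * (if x ∈ A then 1 else 0) := by
      intro x hx
      by_cases hxA : x ∈ A
      · obtain ⟨h1, h2⟩ := hmemA x hx hxA
        rw [if_pos hxA, h1, h2]; ring
      · obtain ⟨h1, h2⟩ := hnotA x hx hxA
        rw [if_neg hxA, h1]; ring
    have hedgept : ∀ x ∈ Ω, ∀ y ∈ clos μ Ω,
        |g x - g y| = |g' x - g' y| +
          (M - M') * (if (x ∈ A) ↔ (y ∈ A) then 0 else 1) := by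
      intro x hx y hy
      have hxc : x ∈ clos μ Ω := omega_subset_clos hx
      by_cases hxA : x ∈ A <;> by_cases hyA : y ∈ A
      · obtain ⟨hx1, hx2⟩ := hmemA x hxc hxA
        obtain ⟨hy1, hy2⟩ := hmemA y hy hyA
        rw [if_pos (iff_of_true hxA hyA), hx1, hy1, hx2, hy2]; simp
      · obtain ⟨hx1, hx2⟩ := hmemA x hxc hxA
        obtain ⟨hy1, hy2⟩ := hnotA y hy hyA
        rw [if_neg (by simp [hxA, hyA]), hx1, hx2, hy1,
          abs_of_nonneg (by linarith), abs_of_nonneg (by linarith)]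
        ring
      · obtain ⟨hx1, hx2⟩ := hnotA x hxc hxA
        obtain ⟨hy1, hy2⟩ := hmemA y hy hyA
        rw [if_neg (by simp [hxA, hyA]), hy1, hy2, hx1,
          abs_of_nonpos (by linarith), abs_of_nonpos (by linarith)]
        ring
      · obtain ⟨hx1, hx2⟩ := hnotA x hxc hxA
        obtain ⟨hy1, hy2⟩ := hnotA y hy hyA
        rw [if_pos (iff_of_false hxA hyA), hx1, hy1]; simp
    have hsumid : ∑ x ∈ bdry μ Ω, vm μ Ω x * g x =
        (∑ x ∈ bdry μ Ω, vm μ Ω x * g' x) + (M - M') * msum μ Ω (A ∩ bdry μ Ω) := by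
      have h1 : ∑ x ∈ bdry μ Ω, vm μ Ω x * g x
          = ∑ x ∈ bdry μ Ω, (vm μ Ω x * g' x +
            (M - M') * (if x ∈ A then vm μ Ω x else 0)) := by
        refine Finset.sum_congr rfl fun x hx => ?_
        rw [hpt x (bdry_subset_clos hx)]
        split <;> ring
      rw [h1, Finset.sum_add_distrib, ← Finset.mul_sum]
      congr 2
      rw [← Finset.sum_filter]
      unfold msum
      congr 1
      rw [Finset.filter_mem_eq_inter, Finset.inter_comm]
    have hedgeid : edgeSum μ Ω (fun x y => |g x - g y|) =
        edgeSum μ Ω (fun x y => |g' x - g' y|) + (M - M') * cut μ Ω A := by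
      rw [edgeSum_congr hedgept, edgeSum_add_smul]
      rfl
    have hsub : (((clos μ Ω).filter fun x => 0 < g' x).image g') ⊆ S.erase M := by
      intro t ht
      obtain ⟨x, hx, rfl⟩ := Finset.mem_image.mp ht
      obtain ⟨hxc, hx0⟩ := Finset.mem_filter.mp hx
      rcases le_or_gt (g x) M' with hle | hlt
      · have he : g' x = g x := min_eq_left hle
        have hgx0 : 0 < g x := he ▸ hx0
        refine Finset.mem_erase.mpr ⟨?_, ?_⟩
        · rw [he]; exact ne_of_lt (lt_of_le_of_lt hle hM'M)
        · rw [he]; exact Finset.mem_image_of_mem g (Finset.mem_filter.mpr ⟨hxc, hgx0⟩)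
      · have he : g' x = M' := min_eq_right hlt.le
        have hM'pos : 0 < M' := he ▸ hx0
        rw [he]
        have hmem := Finset.max'_mem _ hins
        rcases Finset.mem_insert.mp hmem with h | h
        · exact absurd h (ne_of_gt hM'pos)
        · exact h
    have hcard' : (((clos μ Ω).filter fun x => 0 < g' x).image g').card < n := by
      calc (((clos μ Ω).filter fun x => 0 < g' x).image g').card
          ≤ (S.erase M).card := Finset.card_le_card hsub
        _ < S.card := Finset.card_erase_lt_of_mem hMS
        _ = n := hcard
    have hhalf' : msum μ Ω ((bdry μ Ω).filter fun x => 0 < g' x) ≤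
        msum μ Ω (bdry μ Ω) / 2 := by
      refine le_trans (msum_mono hnn ?_) hhalf
      intro x hx
      obtain ⟨hxb, hx0⟩ := Finset.mem_filter.mp hx
      exact Finset.mem_filter.mpr ⟨hxb, lt_of_lt_of_le hx0 (min_le_left _ _)⟩
    have hIH := ih _ hcard' g' hg' rfl hhalf'
    have hcutA : hE μ Ω * msum μ Ω (A ∩ bdry μ Ω) ≤ cut μ Ω A := by
      rcases eq_or_lt_of_le (msum_nonneg (Ω := Ω) hnn (A ∩ bdry μ Ω)) with h | h
      · rw [← h, mul_zero]; exact cut_nonneg hnn A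
      · apply hE_mul_le hnn (Finset.filter_subset _ _) h
        refine le_trans (msum_mono hnn ?_) hhalf
        intro x hx
        obtain ⟨hxA, hxb⟩ := Finset.mem_inter.mp hx
        exact Finset.mem_filter.mpr
          ⟨hxb, lt_of_lt_of_le hMpos (Finset.mem_filter.mp hxA).2⟩
    calc hE μ Ω * (∑ x ∈ bdry μ Ω, vm μ Ω x * g x)
        = hE μ Ω * (∑ x ∈ bdry μ Ω, vm μ Ω x * g' x) +
          (M - M') * (hE μ Ω * msum μ Ω (A ∩ bdry μ Ω)) := by rw [hsumid]; ring
      _ ≤ edgeSum μ Ω (fun x y => |g' x - g' y|) + (M - M') * cut μ Ω A :=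
          add_le_add hIH (mul_le_mul_of_nonneg_left hcutA (by linarith))
      _ = edgeSum μ Ω (fun x y => |g x - g y|) := hedgeid.symm


lemma median (hnn : ∀ x y, 0 ≤ μ x y) (f : V → ℝ) (hne : (bdry μ Ω).Nonempty) :
    ∃ c : ℝ,
      msum μ Ω ((bdry μ Ω).filter fun x => c < f x) ≤ msum μ Ω (bdry μ Ω) / 2 ∧
      msum μ Ω ((bdry μ Ω).filter fun x => f x < c) ≤ msum μ Ω (bdry μ Ω) / 2 := by
  set S := (bdry μ Ω).image f with hS
  have hSne : S.Nonempty := hne.image f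
  set T := S.filter (fun t =>
    msum μ Ω (bdry μ Ω) / 2 ≤ msum μ Ω ((bdry μ Ω).filter fun x => f x ≤ t)) with hT
  have hTne : T.Nonempty := by
    refine ⟨S.max' hSne, Finset.mem_filter.mpr ⟨S.max'_mem hSne, ?_⟩⟩
    have hfull : (bdry μ Ω).filter (fun x => f x ≤ S.max' hSne) = bdry μ Ω :=
      Finset.filter_true_of_mem fun x hx =>
        Finset.le_max' _ _ (Finset.mem_image_of_mem f hx)
    rw [hfull]
    linarith [msum_nonneg (μ := μ) (Ω := Ω) hnn (bdry μ Ω)]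
  set c := T.min' hTne with hc
  have hcT : c ∈ T := T.min'_mem hTne
  have hc2 := (Finset.mem_filter.mp hcT).2
  refine ⟨c, ?_, ?_⟩
  · have hsplit := msum_filter_split (μ := μ) (Ω := Ω) (bdry μ Ω) (fun x => f x ≤ c)
    have heq : (bdry μ Ω).filter (fun x => ¬ f x ≤ c) =
        (bdry μ Ω).filter (fun x => c < f x) :=
      Finset.filter_congr fun x _ => by simp [not_le]
    rw [heq] at hsplit
    linarith
  · rcases Finset.eq_empty_or_nonempty ((bdry μ Ω).filter fun x => f x < c) with he | hne2
    · rw [he]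
      have h0 : msum μ Ω (∅ : Finset V) = 0 := by simp [msum]
      rw [h0]
      linarith [msum_nonneg (μ := μ) (Ω := Ω) hnn (bdry μ Ω)]
    · obtain ⟨x₀, hx₀⟩ := hne2
      obtain ⟨hx₀b, hx₀f⟩ := Finset.mem_filter.mp hx₀
      have hSfne : (S.filter fun t => t < c).Nonempty :=
        ⟨f x₀, Finset.mem_filter.mpr ⟨Finset.mem_image_of_mem f hx₀b, hx₀f⟩⟩
      obtain ⟨t, htmem, htmax⟩ : ∃ t, (t ∈ S ∧ t < c) ∧
          ∀ u ∈ S.filter (fun u => u < c), u ≤ t :=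
        ⟨(S.filter fun u => u < c).max' hSfne,
          Finset.mem_filter.mp (Finset.max'_mem _ hSfne),
          fun u hu => Finset.le_max' _ _ hu⟩
      have htnT : t ∉ T := fun h =>
        absurd (Finset.min'_le _ _ h) (not_le.mpr htmem.2)
      have htlt : msum μ Ω ((bdry μ Ω).filter fun x => f x ≤ t) <
          msum μ Ω (bdry μ Ω) / 2 := by
        by_contra h
        exact htnT (Finset.mem_filter.mpr ⟨htmem.1, not_lt.mp h⟩)
      have hsubf : (bdry μ Ω).filter (fun x => f x < c) ⊆
          (bdry μ Ω).filter (fun x => f x ≤ t) := by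
        intro x hx
        obtain ⟨hxb, hxf⟩ := Finset.mem_filter.mp hx
        exact Finset.mem_filter.mpr ⟨hxb, htmax _
          (Finset.mem_filter.mpr ⟨Finset.mem_image_of_mem f hxb, hxf⟩)⟩
      linarith [msum_mono (μ := μ) (Ω := Ω) hnn hsubf]

lemma maxadd (a : ℝ) : max a 0 + max (-a) 0 = |a| := by
  rcases le_total a 0 with h | h
  · rw [max_eq_right h, max_eq_left (neg_nonneg.mpr h), abs_of_nonpos h]; ring
  · rw [max_eq_left h, max_eq_right (neg_nonpos.mpr h), abs_of_nonneg h]; ring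

lemma abs_parts (a b : ℝ) :
    |max a 0 - max b 0| + |max (-a) 0 - max (-b) 0| ≤ |a - b| := by
  rcases le_total a 0 with ha | ha <;> rcases le_total b 0 with hb | hb
  · rw [max_eq_right ha, max_eq_right hb, max_eq_left (neg_nonneg.mpr ha),
      max_eq_left (neg_nonneg.mpr hb)]
    simp only [sub_zero, sub_self, abs_zero, zero_add, neg_sub_neg]
    rw [abs_sub_comm]
  · rw [max_eq_right ha, max_eq_left hb, max_eq_left (neg_nonneg.mpr ha),
      max_eq_right (neg_nonpos.mpr hb)]
    rw [abs_of_nonpos (show (0:ℝ) - b ≤ 0 by linarith),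
      abs_of_nonneg (show (0:ℝ) ≤ -a - 0 by linarith),
      abs_of_nonpos (show a - b ≤ 0 by linarith)]
    linarith
  · rw [max_eq_left ha, max_eq_right hb, max_eq_right (neg_nonpos.mpr ha),
      max_eq_left (neg_nonneg.mpr hb)]
    rw [abs_of_nonneg (show (0:ℝ) ≤ a - 0 by linarith),
      abs_of_nonpos (show (0:ℝ) - -b ≤ 0 by linarith),
      abs_of_nonneg (show (0:ℝ) ≤ a - b by linarith)]
    linarith
  · rw [max_eq_left ha, max_eq_left hb, max_eq_right (neg_nonpos.mpr ha),
      max_eq_right (neg_nonpos.mpr hb)]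
    simp

lemma bdry_nonempty_of_D (hnn : ∀ x y, 0 ≤ μ x y) (f : V → ℝ)
    (hD : 0 < sInf {s : ℝ | ∃ a : ℝ, s = ∑ x ∈ bdry μ Ω, vm μ Ω x * |f x - a|}) :
    (bdry μ Ω).Nonempty := by
  by_contra h
  have he : bdry μ Ω = ∅ := Finset.not_nonempty_iff_eq_empty.mp h
  have h0 : (0:ℝ) ∈ {s : ℝ | ∃ a : ℝ, s = ∑ x ∈ bdry μ Ω, vm μ Ω x * |f x - a|} :=
    ⟨0, by rw [he]; simp⟩
  have hbdd : BddBelow {s : ℝ | ∃ a : ℝ, s = ∑ x ∈ bdry μ Ω, vm μ Ω x * |f x - a|} :=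
    ⟨0, by rintro s ⟨a, rfl⟩; exact Finset.sum_nonneg fun x _ =>
      mul_nonneg (vm_nonneg hnn x) (abs_nonneg _)⟩
  linarith [csInf_le hbdd h0]

lemma hE_le_quotient (hnn : ∀ x y, 0 ≤ μ x y) (f : V → ℝ)
    (hD : 0 < sInf {s : ℝ | ∃ a : ℝ, s = ∑ x ∈ bdry μ Ω, vm μ Ω x * |f x - a|}) :
    hE μ Ω ≤ edgeSum μ Ω (fun x y => |f x - f y|) /
      sInf {s : ℝ | ∃ a : ℝ, s = ∑ x ∈ bdry μ Ω, vm μ Ω x * |f x - a|} := by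
  have hbdd : BddBelow {s : ℝ | ∃ a : ℝ, s = ∑ x ∈ bdry μ Ω, vm μ Ω x * |f x - a|} :=
    ⟨0, by rintro s ⟨a, rfl⟩; exact Finset.sum_nonneg fun x _ =>
      mul_nonneg (vm_nonneg hnn x) (abs_nonneg _)⟩
  have hDle : ∀ a : ℝ,
      sInf {s : ℝ | ∃ a : ℝ, s = ∑ x ∈ bdry μ Ω, vm μ Ω x * |f x - a|} ≤
        ∑ x ∈ bdry μ Ω, vm μ Ω x * |f x - a| :=
    fun a => csInf_le hbdd ⟨a, rfl⟩
  obtain ⟨c, hc1, hc2⟩ := median hnn f (bdry_nonempty_of_D hnn f hD)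
  set g₁ : V → ℝ := fun x => max (f x - c) 0 with hg1
  set g₂ : V → ℝ := fun x => max (c - f x) 0 with hg2
  have hco1 : hE μ Ω * (∑ x ∈ bdry μ Ω, vm μ Ω x * g₁ x) ≤
      edgeSum μ Ω fun x y => |g₁ x - g₁ y| := by
    apply coarea_aux hnn _ g₁ (fun x => le_max_right _ _) rfl
    have heq : (bdry μ Ω).filter (fun x => 0 < g₁ x) =
        (bdry μ Ω).filter (fun x => c < f x) :=
      Finset.filter_congr fun x _ => by simp [hg1, lt_max_iff, sub_pos]
    rw [heq]; exact hc1
  have hco2 : hE μ Ω * (∑ x ∈ bdry μ Ω, vm μ Ω x * g₂ x) ≤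
      edgeSum μ Ω fun x y => |g₂ x - g₂ y| := by
    apply coarea_aux hnn _ g₂ (fun x => le_max_right _ _) rfl
    have heq : (bdry μ Ω).filter (fun x => 0 < g₂ x) =
        (bdry μ Ω).filter (fun x => f x < c) :=
      Finset.filter_congr fun x _ => by simp [hg2, lt_max_iff, sub_pos]
    rw [heq]; exact hc2
  have hsum : (∑ x ∈ bdry μ Ω, vm μ Ω x * g₁ x) + (∑ x ∈ bdry μ Ω, vm μ Ω x * g₂ x)
      = ∑ x ∈ bdry μ Ω, vm μ Ω x * |f x - c| := by
    rw [← Finset.sum_add_distrib]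
    refine Finset.sum_congr rfl fun x _ => ?_
    rw [← mul_add]
    congr 1
    show max (f x - c) 0 + max (c - f x) 0 = |f x - c|
    simpa [neg_sub] using maxadd (f x - c)
  have hedge : edgeSum μ Ω (fun x y => |g₁ x - g₁ y|) +
      edgeSum μ Ω (fun x y => |g₂ x - g₂ y|)
      ≤ edgeSum μ Ω (fun x y => |f x - f y|) := by
    have hadd := edgeSum_add_smul (μ := μ) (Ω := Ω) 1
      (fun x y => |g₁ x - g₁ y|) (fun x y => |g₂ x - g₂ y|)
    rw [one_mul] at hadd
    rw [← hadd]
    apply edgeSum_mono hnn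
    intro x _ y _
    show |g₁ x - g₁ y| + 1 * |g₂ x - g₂ y| ≤ |f x - f y|
    rw [one_mul]
    have h1 : g₂ x = max (-(f x - c)) 0 := by rw [hg2]; simp [neg_sub]
    have h2 : g₂ y = max (-(f y - c)) 0 := by rw [hg2]; simp [neg_sub]
    have h3 : f x - f y = (f x - c) - (f y - c) := by ring
    rw [h1, h2, h3]
    exact abs_parts _ _
  have hfinal : hE μ Ω *
      sInf {s : ℝ | ∃ a : ℝ, s = ∑ x ∈ bdry μ Ω, vm μ Ω x * |f x - a|} ≤
      edgeSum μ Ω (fun x y => |f x - f y|) := by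
    have h1 : hE μ Ω * (∑ x ∈ bdry μ Ω, vm μ Ω x * |f x - c|) ≤
        edgeSum μ Ω (fun x y => |f x - f y|) := by
      calc hE μ Ω * (∑ x ∈ bdry μ Ω, vm μ Ω x * |f x - c|)
          = hE μ Ω * (∑ x ∈ bdry μ Ω, vm μ Ω x * g₁ x) +
            hE μ Ω * (∑ x ∈ bdry μ Ω, vm μ Ω x * g₂ x) := by rw [← hsum]; ring
        _ ≤ edgeSum μ Ω (fun x y => |g₁ x - g₁ y|) +
            edgeSum μ Ω (fun x y => |g₂ x - g₂ y|) := add_le_add hco1 hco2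
        _ ≤ edgeSum μ Ω (fun x y => |f x - f y|) := hedge
    have h2 := mul_le_mul_of_nonneg_left (hDle c) (hE_nonneg (μ := μ) (Ω := Ω) hnn)
    linarith
  exact (le_div_iff₀ hD).mpr hfinal

lemma indicator_facts (hnn : ∀ x y, 0 ≤ μ x y) {A : Finset V}
    (h2 : 0 < msum μ Ω (A ∩ bdry μ Ω))
    (h3 : msum μ Ω (A ∩ bdry μ Ω) ≤ msum μ Ω (bdry μ Ω) / 2) :
    ∃ f : V → ℝ,
      sInf {s : ℝ | ∃ a : ℝ, s = ∑ x ∈ bdry μ Ω, vm μ Ω x * |f x - a|} =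
        msum μ Ω (A ∩ bdry μ Ω) ∧
      edgeSum μ Ω (fun x y => |f x - f y|) = cut μ Ω A := by
  refine ⟨fun x => if x ∈ A then 1 else 0, ?_, ?_⟩
  · show sInf {s : ℝ | ∃ a : ℝ, s =
        ∑ x ∈ bdry μ Ω, vm μ Ω x * |(if x ∈ A then (1:ℝ) else 0) - a|} =
      msum μ Ω (A ∩ bdry μ Ω)
    have hval : msum μ Ω (A ∩ bdry μ Ω) =
        ∑ x ∈ bdry μ Ω, vm μ Ω x * |(if x ∈ A then (1:ℝ) else 0) - 0| := by
      have hterm : ∀ x, vm μ Ω x * |(if x ∈ A then (1:ℝ) else 0) - 0| =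
          if x ∈ A then vm μ Ω x else 0 := by
        intro x; split <;> simp
      rw [Finset.sum_congr rfl fun x _ => hterm x, ← Finset.sum_filter]
      unfold msum
      apply Finset.sum_congr ?_ fun _ _ => rfl
      ext x; simp [and_comm]
    apply le_antisymm
    · have hbdd : BddBelow {s : ℝ | ∃ a : ℝ, s =
          ∑ x ∈ bdry μ Ω, vm μ Ω x * |(if x ∈ A then (1:ℝ) else 0) - a|} := by
        refine ⟨0, ?_⟩
        rintro s ⟨a, rfl⟩
        exact Finset.sum_nonneg fun x _ =>
          mul_nonneg (vm_nonneg hnn x) (abs_nonneg _)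
      exact csInf_le hbdd ⟨0, hval⟩
    · have hnonempty : {s : ℝ | ∃ a : ℝ, s =
          ∑ x ∈ bdry μ Ω, vm μ Ω x * |(if x ∈ A then (1:ℝ) else 0) - a|}.Nonempty :=
        ⟨_, ⟨0, rfl⟩⟩
      apply le_csInf hnonempty
      rintro s ⟨a, rfl⟩
      have hterm : ∀ x, vm μ Ω x * |(if x ∈ A then (1:ℝ) else 0) - a| =
          (if x ∈ A then vm μ Ω x else 0) * |1 - a| +
          (if x ∈ A then 0 else vm μ Ω x) * |a| := by
        intro x
        by_cases hx : x ∈ A <;> simp [hx, zero_sub, abs_neg]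
      have hsum : ∑ x ∈ bdry μ Ω, vm μ Ω x * |(if x ∈ A then (1:ℝ) else 0) - a| =
          (∑ x ∈ bdry μ Ω, if x ∈ A then vm μ Ω x else 0) * |1 - a| +
          (∑ x ∈ bdry μ Ω, if x ∈ A then 0 else vm μ Ω x) * |a| := by
        rw [Finset.sum_congr rfl fun x _ => hterm x, Finset.sum_add_distrib,
          ← Finset.sum_mul, ← Finset.sum_mul]
      have hs1 : (∑ x ∈ bdry μ Ω, if x ∈ A then vm μ Ω x else 0) =
          msum μ Ω (A ∩ bdry μ Ω) := by
        rw [← Finset.sum_filter]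
        unfold msum
        apply Finset.sum_congr ?_ fun _ _ => rfl
        ext x; simp [and_comm]
      have h12 : (∑ x ∈ bdry μ Ω, if x ∈ A then vm μ Ω x else 0) +
          (∑ x ∈ bdry μ Ω, if x ∈ A then 0 else vm μ Ω x) = msum μ Ω (bdry μ Ω) := by
        rw [← Finset.sum_add_distrib]
        unfold msum
        refine Finset.sum_congr rfl fun x _ => ?_
        split <;> simp
      have habs : 1 ≤ |1 - a| + |a| := by
        have := abs_add_le (1 - a) a
        simp only [sub_add_cancel, abs_one] at this
        linarith
      rw [hsum, hs1]
      have hs2 : (∑ x ∈ bdry μ Ω, if x ∈ A then 0 else vm μ Ω x) =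
          msum μ Ω (bdry μ Ω) - msum μ Ω (A ∩ bdry μ Ω) := by
        rw [← hs1]
        linarith
      rw [hs2]
      nlinarith [abs_nonneg (1 - a), abs_nonneg a, h2.le]
  · show edgeSum μ Ω
        (fun x y => |(if x ∈ A then (1:ℝ) else 0) - (if y ∈ A then 1 else 0)|) =
      cut μ Ω A
    have heq : (fun x y => |(if x ∈ A then (1:ℝ) else 0) - (if y ∈ A then 1 else 0)|)
        = fun x y => if (x ∈ A) ↔ (y ∈ A) then (0:ℝ) else 1 := by
      funext x y
      by_cases hx : x ∈ A <;> by_cases hy : y ∈ A <;> simp [hx, hy]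
    rw [heq]; rfl

lemma exists_admissible (hnn : ∀ x y, 0 ≤ μ x y) (f : V → ℝ)
    (hD : 0 < sInf {s : ℝ | ∃ a : ℝ, s = ∑ x ∈ bdry μ Ω, vm μ Ω x * |f x - a|}) :
    ∃ A : Finset V, A ⊆ clos μ Ω ∧ 0 < msum μ Ω (A ∩ bdry μ Ω) ∧
      msum μ Ω (A ∩ bdry μ Ω) ≤ msum μ Ω (bdry μ Ω) / 2 := by
  have hbdd : BddBelow {s : ℝ | ∃ a : ℝ, s = ∑ x ∈ bdry μ Ω, vm μ Ω x * |f x - a|} :=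
    ⟨0, by rintro s ⟨a, rfl⟩; exact Finset.sum_nonneg fun x _ =>
      mul_nonneg (vm_nonneg hnn x) (abs_nonneg _)⟩
  obtain ⟨z, hz⟩ := bdry_nonempty_of_D hnn f hD
  have hw : ∃ w ∈ bdry μ Ω, f w ≠ f z := by
    by_contra h
    push_neg at h
    have hzero : (∑ x ∈ bdry μ Ω, vm μ Ω x * |f x - f z|) = 0 :=
      Finset.sum_eq_zero fun x hx => by rw [h x hx, sub_self, abs_zero, mul_zero]
    have := csInf_le hbdd ⟨f z, hzero.symm⟩
    linarith
  obtain ⟨w, hw, hfw⟩ := hw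
  have hzw : z ≠ w := fun h => hfw (by rw [h])
  have main : ∀ z w : V, z ∈ bdry μ Ω → w ∈ bdry μ Ω → z ≠ w →
      vm μ Ω z ≤ vm μ Ω w →
      ∃ A : Finset V, A ⊆ clos μ Ω ∧ 0 < msum μ Ω (A ∩ bdry μ Ω) ∧
        msum μ Ω (A ∩ bdry μ Ω) ≤ msum μ Ω (bdry μ Ω) / 2 := by
    intro z w hz hw hzw hle
    have hint : ({z} : Finset V) ∩ bdry μ Ω = {z} :=
      Finset.inter_eq_left.mpr (Finset.singleton_subset_iff.mpr hz)
    have hms : msum μ Ω (({z} : Finset V) ∩ bdry μ Ω) = vm μ Ω z := by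
      rw [hint]; exact Finset.sum_singleton _ _
    refine ⟨{z}, Finset.singleton_subset_iff.mpr (bdry_subset_clos hz), ?_, ?_⟩
    · rw [hms]; exact vm_pos_bdry hnn hz
    · rw [hms]
      have hpair : msum μ Ω ({z, w} : Finset V) = vm μ Ω z + vm μ Ω w :=
        Finset.sum_pair hzw
      have hsub : ({z, w} : Finset V) ⊆ bdry μ Ω := by
        intro x hx
        rcases Finset.mem_insert.mp hx with rfl | hx
        · exact hz
        · rw [Finset.mem_singleton.mp hx]; exact hw
      have := msum_mono (μ := μ) (Ω := Ω) hnn hsub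
      rw [hpair] at this
      linarith
  rcases le_total (vm μ Ω z) (vm μ Ω w) with h | h
  · exact main z w hz hw hzw h
  · exact main w z hw hz hzw.symm h

end Helpers

/-- Theorem 1.2 (Escobar-type Cheeger constant equals the Sobolev-type constant):
h_E(Ω̃) is the infimum, over functions f on Ω̄ for which the denominator
inf_{a ∈ ℝ} Σ_{x∈δΩ} m_x |f(x) − a| is nonzero, of
(Σ_{e={x,y}∈E(Ω,Ω̄)} μ_{xy} |f(x) − f(y)|) / (inf_{a∈ℝ} Σ_{x∈δΩ} m_x |f(x) − a|). -/
theorem stmt_0 (μ : V → V → ℝ) (Ω : Finset V)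
    (hsym : ∀ x y, μ x y = μ y x) (hnn : ∀ x y, 0 ≤ μ x y)
    (hconn : TilConnected μ Ω) :
    hE μ Ω = sInf { r : ℝ | ∃ f : V → ℝ,
      0 < sInf { s : ℝ | ∃ a : ℝ, s = ∑ x ∈ bdry μ Ω, vm μ Ω x * |f x - a| } ∧
      r = edgeSum μ Ω (fun x y => |f x - f y|) /
            sInf { s : ℝ | ∃ a : ℝ, s = ∑ x ∈ bdry μ Ω, vm μ Ω x * |f x - a| } } := by
  have hmem_of_A : ∀ (A : Finset V), A ⊆ clos μ Ω →
      0 < msum μ Ω (A ∩ bdry μ Ω) →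
      msum μ Ω (A ∩ bdry μ Ω) ≤ msum μ Ω (bdry μ Ω) / 2 →
      cut μ Ω A / msum μ Ω (A ∩ bdry μ Ω) ∈ { r : ℝ | ∃ f : V → ℝ,
        0 < sInf { s : ℝ | ∃ a : ℝ, s = ∑ x ∈ bdry μ Ω, vm μ Ω x * |f x - a| } ∧
        r = edgeSum μ Ω (fun x y => |f x - f y|) /
          sInf { s : ℝ | ∃ a : ℝ, s = ∑ x ∈ bdry μ Ω, vm μ Ω x * |f x - a| } } := by
    intro A h1 h2 h3
    obtain ⟨f, hf1, hf2⟩ := indicator_facts hnn h2 h3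
    exact ⟨f, by rw [hf1]; exact h2, by rw [hf2, hf1]⟩
  apply le_antisymm
  · rcases Set.eq_empty_or_nonempty { r : ℝ | ∃ f : V → ℝ,
        0 < sInf { s : ℝ | ∃ a : ℝ, s = ∑ x ∈ bdry μ Ω, vm μ Ω x * |f x - a| } ∧
        r = edgeSum μ Ω (fun x y => |f x - f y|) /
          sInf { s : ℝ | ∃ a : ℝ, s = ∑ x ∈ bdry μ Ω, vm μ Ω x * |f x - a| } }
      with hR | hR
    · have hSempty : { r : ℝ | ∃ A : Finset V, A ⊆ clos μ Ω ∧
          0 < msum μ Ω (A ∩ bdry μ Ω) ∧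
          msum μ Ω (A ∩ bdry μ Ω) ≤ msum μ Ω (bdry μ Ω) / 2 ∧
          r = cut μ Ω A / msum μ Ω (A ∩ bdry μ Ω) } = ∅ := by
        rw [Set.eq_empty_iff_forall_notMem]
        rintro r ⟨A, h1, h2, h3, rfl⟩
        have hmem := hmem_of_A A h1 h2 h3
        rw [hR] at hmem
        exact hmem
      rw [hR, Real.sInf_empty]
      unfold hE
      rw [hSempty, Real.sInf_empty]
    · refine le_csInf hR ?_
      rintro r ⟨f, hD, rfl⟩
      exact hE_le_quotient hnn f hD
  · rcases Set.eq_empty_or_nonempty { r : ℝ | ∃ A : Finset V, A ⊆ clos μ Ω ∧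
        0 < msum μ Ω (A ∩ bdry μ Ω) ∧
        msum μ Ω (A ∩ bdry μ Ω) ≤ msum μ Ω (bdry μ Ω) / 2 ∧
        r = cut μ Ω A / msum μ Ω (A ∩ bdry μ Ω) } with hS | hS
    · have hRe : { r : ℝ | ∃ f : V → ℝ,
          0 < sInf { s : ℝ | ∃ a : ℝ, s = ∑ x ∈ bdry μ Ω, vm μ Ω x * |f x - a| } ∧
          r = edgeSum μ Ω (fun x y => |f x - f y|) /
            sInf { s : ℝ | ∃ a : ℝ, s = ∑ x ∈ bdry μ Ω, vm μ Ω x * |f x - a| } } = ∅ := by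
        rw [Set.eq_empty_iff_forall_notMem]
        rintro r ⟨f, hD, rfl⟩
        obtain ⟨A, h1, h2, h3⟩ := exists_admissible hnn f hD
        have hmem : cut μ Ω A / msum μ Ω (A ∩ bdry μ Ω) ∈
            { r : ℝ | ∃ A : Finset V, A ⊆ clos μ Ω ∧
              0 < msum μ Ω (A ∩ bdry μ Ω) ∧
              msum μ Ω (A ∩ bdry μ Ω) ≤ msum μ Ω (bdry μ Ω) / 2 ∧
              r = cut μ Ω A / msum μ Ω (A ∩ bdry μ Ω) } := ⟨A, h1, h2, h3, rfl⟩
        rw [hS] at hmem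
        exact hmem
      rw [hRe, Real.sInf_empty]
      unfold hE
      rw [hS, Real.sInf_empty]
    · unfold hE
      apply csInf_le_csInf
      · refine ⟨0, ?_⟩
        rintro r ⟨f, hD, rfl⟩
        exact div_nonneg (edgeSum_nonneg hnn fun x y => abs_nonneg _) hD.le
      · exact hS
      · rintro r ⟨A, h1, h2, h3, rfl⟩
        exact hmem_of_A A h1 h2 h3
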